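/- Let w = w_1 w_2 … w_k be a word over the alphabet {R, D}. Then the number of 01-fillings of the Ferrers shape associated with w equals the number of sequences (λ^0, λ^1, …, λ^k) of partitions with λ^0 = λ^k = ∅ such that for each 1 ≤ i ≤ k: if w_i = R then λ^i is obtained from λ^{i-1} by adding a (possibly empty) horizontal strip, and if w_i = D then λ^i is obtained from λ^{i-1} by deleting a (possibly empty) vertical strip. -/

import Mathlib

/-- A partition: a weakly decreasing, eventually-zero sequence of nonnegative integers
(`parts i` is the `(i+1)`-st part `λ_{i+1}`). -/
structure Partn where
  parts : ℕ → ℕ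
  antitone : ∀ i j, i ≤ j → parts j ≤ parts i
  eventually_zero : ∃ N, ∀ i, N ≤ i → parts i = 0

/-- The empty partition `∅`. -/
def Partn.empty : Partn :=
  ⟨fun _ => 0, fun _ _ _ => le_rfl, ⟨0, fun _ _ => rfl⟩⟩

/-- `lam` is obtained from `μ` by adding a square (equivalently, `μ` is obtained from
`lam` by deleting a square): one part grows by 1 and all other parts agree. -/
def AddSqP (μ lam : Partn) : Prop :=
  ∃ j, lam.parts j = μ.parts j + 1 ∧ ∀ i, i ≠ j → lam.parts i = μ.parts i

/-- `lam` is obtained from `μ` by adding a (possibly empty) horizontal strip: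
`μ_i ≤ λ_i` and `λ_{i+1} ≤ μ_i` for all `i`. -/
def HStrip (μ lam : Partn) : Prop :=
  ∀ j, μ.parts j ≤ lam.parts j ∧ lam.parts (j + 1) ≤ μ.parts j

/-- `lam` is obtained from `μ` by deleting a (possibly empty) vertical strip:
`λ_i ≤ μ_i ≤ λ_i + 1` for all `i`. -/
def VStripDel (μ lam : Partn) : Prop :=
  ∀ j, lam.parts j ≤ μ.parts j ∧ μ.parts j ≤ lam.parts j + 1

theorem Partn.ext' {p q : Partn} (h : ∀ j, p.parts j = q.parts j) : p = q := by
  cases p; cases q; simp only [Partn.mk.injEq]; exact funext h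

namespace Krat
open Finset

def Aset (μ ν : Partn) : Set Partn := {ρ | VStripDel μ ρ ∧ HStrip ρ ν}
def Bset (μ ν : Partn) : Set Partn := {ρ | HStrip μ ρ ∧ VStripDel ρ ν}

def aLo (μ ν : Partn) (j : ℕ) : ℕ := max (μ.parts j - 1) (ν.parts (j+1))
def aHi (μ ν : Partn) (j : ℕ) : ℕ := min (μ.parts j) (ν.parts j)
def bLo (μ ν : Partn) (j : ℕ) : ℕ := max (μ.parts j) (ν.parts j)
def bHi (μ ν : Partn) : ℕ → ℕ
  | 0 => ν.parts 0 + 1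
  | (j+1) => min (ν.parts (j+1) + 1) (μ.parts j)

def dnum (μ ν : Partn) (j : ℕ) : ℕ := aHi μ ν j + 1 - aLo μ ν j
def enum (μ ν : Partn) (j : ℕ) : ℕ := bHi μ ν j + 1 - bLo μ ν j

lemma mem_Aset_iff (μ ν ρ : Partn) :
    ρ ∈ Aset μ ν ↔ ∀ j, aLo μ ν j ≤ ρ.parts j ∧ ρ.parts j ≤ aHi μ ν j := by
  constructor
  · rintro ⟨h1, h2⟩ j
    have := h1 j; have := h2 j
    simp only [aLo, aHi]; omega
  · intro h
    refine ⟨fun j => ?_, fun j => ?_⟩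
    · have := h j; simp only [aLo, aHi] at this; omega
    · have h1 := h j; have h2 := h (j+1)
      simp only [aLo, aHi] at h1 h2; omega

lemma mem_Bset_iff (μ ν ρ : Partn) :
    ρ ∈ Bset μ ν ↔ ∀ j, bLo μ ν j ≤ ρ.parts j ∧ ρ.parts j ≤ bHi μ ν j := by
  constructor
  · rintro ⟨h1, h2⟩ j
    match j with
    | 0 =>
      have a := h1 0; have b := h2 0
      simp only [bLo, bHi]; omega
    | (j+1) =>
      have a := h1 (j+1); have b := h2 (j+1); have c := (h1 j).2
      simp only [bLo, bHi]; omega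
  · intro h
    refine ⟨fun j => ?_, fun j => ?_⟩
    · have h1 := h j; have h2 := h (j+1)
      simp only [bLo, bHi] at h1 h2
      constructor
      · omega
      · omega
    · have h1 := h j
      match j with
      | 0 => simp only [bLo, bHi] at h1; omega
      | (j+1) => simp only [bLo, bHi] at h1; omega

lemma key_tri (μ ν : Partn) (M : ℕ) :
    (ν.parts (M+1) < μ.parts M →
      ∏ j ∈ range (M+1), enum μ ν j = ∏ j ∈ range (M+1), dnum μ ν j) ∧
    (ν.parts (M+1) = μ.parts M →
      ∏ j ∈ range (M+1), enum μ ν j = 2 * ∏ j ∈ range (M+1), dnum μ ν j) ∧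
    (μ.parts M < ν.parts (M+1) →
      ∏ j ∈ range (M+1), dnum μ ν j = 0 ∧ ∏ j ∈ range (M+2), enum μ ν j = 0) := by
  induction M with
  | zero =>
    have hν : ν.parts 1 ≤ ν.parts 0 := ν.antitone 0 1 (by omega)
    have hd0 : dnum μ ν 0 = min (μ.parts 0) (ν.parts 0) + 1 - max (μ.parts 0 - 1) (ν.parts 1) := rfl
    have he0 : enum μ ν 0 = (ν.parts 0 + 1) + 1 - max (μ.parts 0) (ν.parts 0) := rfl
    have he1 : enum μ ν 1 = min (ν.parts 1 + 1) (μ.parts 0) + 1 - max (μ.parts 1) (ν.parts 1) := rfl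
    have hix : ν.parts (0+1) = ν.parts 1 := rfl
    have hix2 : μ.parts (0+1) = μ.parts 1 := rfl
    have p1 : ∀ g : ℕ → ℕ, ∏ j ∈ range (0+1), g j = g 0 := fun g => by simp
    have p2 : ∏ j ∈ range (0+2), enum μ ν j = enum μ ν 0 * enum μ ν 1 := by
      rw [show (0+2) = 2 from rfl, prod_range_succ, prod_range_one]
    refine ⟨fun h => ?_, fun h => ?_, fun h => ⟨?_, ?_⟩⟩
    · rw [p1, p1, hd0, he0]; omega
    · rw [p1, p1, hd0, he0]; omega
    · rw [p1, hd0]; omega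
    · rw [p2]
      have h1 : enum μ ν 1 = 0 := by rw [he1]; omega
      rw [h1, mul_zero]
  | succ M IH =>
    obtain ⟨IH1, IH2, IH3⟩ := IH
    have hix : ν.parts (M+1+1) = ν.parts (M+2) := rfl
    have hix2 : μ.parts (M+1+1) = μ.parts (M+2) := rfl
    have hμa : μ.parts (M+1) ≤ μ.parts M := μ.antitone M (M+1) (by omega)
    have hνa : ν.parts (M+2) ≤ ν.parts (M+1) := ν.antitone (M+1) (M+2) (by omega)
    have hd : dnum μ ν (M+1) = min (μ.parts (M+1)) (ν.parts (M+1)) + 1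
        - max (μ.parts (M+1) - 1) (ν.parts (M+2)) := rfl
    have he : enum μ ν (M+1) = min (ν.parts (M+1) + 1) (μ.parts M) + 1
        - max (μ.parts (M+1)) (ν.parts (M+1)) := rfl
    have he2 : enum μ ν (M+2) = min (ν.parts (M+2) + 1) (μ.parts (M+1)) + 1
        - max (μ.parts (M+2)) (ν.parts (M+2)) := rfl
    rw [prod_range_succ (f := enum μ ν) (n := M+1), prod_range_succ (f := dnum μ ν) (n := M+1),
      prod_range_succ (f := enum μ ν) (n := M+2)]
    rcases lt_trichotomy (μ.parts M) (ν.parts (M+1)) with hc | hc | hc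
    · -- old state "<": products already zero
      obtain ⟨hPD, hPE⟩ := IH3 hc
      have hPE' : (∏ x ∈ range (M+1), enum μ ν x) * enum μ ν (M+1) = 0 := by
        rw [← prod_range_succ]; exact hPE
      refine ⟨fun _ => ?_, fun _ => ?_, fun _ => ⟨?_, ?_⟩⟩
      · rw [hPE', hPD, zero_mul]
      · rw [hPE', hPD, zero_mul, mul_zero]
      · rw [hPD, zero_mul]
      · rw [hPE, zero_mul]
    · -- old state "="
      have hPE := IH2 hc.symm
      refine ⟨fun h => ?_, fun h => ?_, fun h => ⟨?_, ?_⟩⟩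
      · -- new ">": need d = 2 e at M+1;  e = 1, d = 2
        have hmn : μ.parts (M+1) ≤ ν.parts (M+1) := by omega
        have hdv : dnum μ ν (M+1) = 2 := by rw [hd]; omega
        have hev : enum μ ν (M+1) = 1 := by rw [he]; omega
        rw [hPE, hdv, hev]; ring
      · have hdv : dnum μ ν (M+1) = 1 := by rw [hd]; omega
        have hev : enum μ ν (M+1) = 1 := by rw [he]; omega
        rw [hPE, hdv, hev]; ring
      · have hdv : dnum μ ν (M+1) = 0 := by rw [hd]; omega
        rw [hdv, mul_zero]
      · have hev : enum μ ν (M+2) = 0 := by rw [he2]; omega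
        rw [hev, mul_zero]
    · -- old state ">"
      have hPE := IH1 hc
      refine ⟨fun h => ?_, fun h => ?_, fun h => ⟨?_, ?_⟩⟩
      · -- new ">": e = d
        have : enum μ ν (M+1) = dnum μ ν (M+1) := by rw [he, hd]; omega
        rw [hPE, this]
      · -- new "=": e = 2, d = 1
        have hdv : dnum μ ν (M+1) = 1 := by rw [hd]; omega
        have hev : enum μ ν (M+1) = 2 := by rw [he]; omega
        rw [hPE, hdv, hev]; ring
      · have hdv : dnum μ ν (M+1) = 0 := by rw [hd]; omega
        rw [hdv, mul_zero]
      · have hev : enum μ ν (M+2) = 0 := by rw [he2]; omega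
        rw [hev, mul_zero]

end Krat

section Part2
namespace Krat
open Finset

variable (μ ν : Partn)

lemma aHi_succ_le_aLo (j : ℕ) : aHi μ ν (j+1) ≤ aLo μ ν j :=
  le_trans (min_le_right _ _) (le_max_right _ _)

lemma bHi_succ_le_bLo (j : ℕ) : bHi μ ν (j+1) ≤ bLo μ ν j :=
  le_trans (min_le_right _ _) (le_max_left _ _)

noncomputable def aEquiv (M : ℕ) (hμ : ∀ j, M ≤ j → μ.parts j = 0)
    (hν : ∀ j, M ≤ j → ν.parts j = 0) :
    ↥(Aset μ ν) ≃ ∀ j : Fin M, ↥(Finset.Icc (aLo μ ν j) (aHi μ ν j)) where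
  toFun ρ j := ⟨ρ.1.parts j, by
    rw [Finset.mem_Icc]; exact (mem_Aset_iff μ ν ρ.1).1 ρ.2 j⟩
  invFun g := by
    refine ⟨⟨fun j => if h : j < M then (g ⟨j, h⟩).1 else 0, ?_, ⟨M, fun i hi => dif_neg (by omega)⟩⟩, ?_⟩
    · have key : ∀ i, (fun j => if h : j < M then (g ⟨j, h⟩).1 else 0) (i+1) ≤
          (fun j => if h : j < M then (g ⟨j, h⟩).1 else 0) i := by
        intro i
        by_cases h1 : i + 1 < M
        · have h0 : i < M := by omega
          simp only [dif_pos h1, dif_pos h0]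
          have b1 := Finset.mem_Icc.1 (g ⟨i+1, h1⟩).2
          have b0 := Finset.mem_Icc.1 (g ⟨i, h0⟩).2
          exact le_trans b1.2 (le_trans (aHi_succ_le_aLo μ ν i) b0.1)
        · simp only [dif_neg h1]; exact Nat.zero_le _
      have ha := antitone_nat_of_succ_le (f := fun j => if h : j < M then (g ⟨j, h⟩).1 else 0) key
      exact fun i j hij => ha hij
    · rw [mem_Aset_iff]
      intro j
      by_cases h : j < M
      · simp only [dif_pos h]
        exact Finset.mem_Icc.1 (g ⟨j, h⟩).2
      · simp only [dif_neg h]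
        constructor
        · simp [aLo, hμ j (by omega), hν (j+1) (by omega)]
        · exact Nat.zero_le _
  left_inv := by
    rintro ⟨ρ, hρ⟩
    refine Subtype.ext (Partn.ext' fun j => ?_)
    by_cases h : j < M
    · simp [dif_pos h]
    · simp only [dif_neg h]
      have := ((mem_Aset_iff μ ν ρ).1 hρ j).2
      have hz : aHi μ ν j = 0 := by simp [aHi, hμ j (by omega)]
      omega
  right_inv := by
    intro g
    funext j
    refine Subtype.ext ?_
    simp only [dif_pos j.2]

noncomputable def bEquiv (M : ℕ) (hμ : ∀ j, M ≤ j → μ.parts j = 0)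
    (hν : ∀ j, M ≤ j → ν.parts j = 0) :
    ↥(Bset μ ν) ≃ ∀ j : Fin (M+1), ↥(Finset.Icc (bLo μ ν j) (bHi μ ν j)) where
  toFun ρ j := ⟨ρ.1.parts j, by
    rw [Finset.mem_Icc]; exact (mem_Bset_iff μ ν ρ.1).1 ρ.2 j⟩
  invFun g := by
    refine ⟨⟨fun j => if h : j < M+1 then (g ⟨j, h⟩).1 else 0, ?_, ⟨M+1, fun i hi => dif_neg (by omega)⟩⟩, ?_⟩
    · have key : ∀ i, (fun j => if h : j < M+1 then (g ⟨j, h⟩).1 else 0) (i+1) ≤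
          (fun j => if h : j < M+1 then (g ⟨j, h⟩).1 else 0) i := by
        intro i
        by_cases h1 : i + 1 < M+1
        · have h0 : i < M+1 := by omega
          simp only [dif_pos h1, dif_pos h0]
          have b1 := Finset.mem_Icc.1 (g ⟨i+1, h1⟩).2
          have b0 := Finset.mem_Icc.1 (g ⟨i, h0⟩).2
          exact le_trans b1.2 (le_trans (bHi_succ_le_bLo μ ν i) b0.1)
        · simp only [dif_neg h1]; exact Nat.zero_le _
      have ha := antitone_nat_of_succ_le (f := fun j => if h : j < M+1 then (g ⟨j, h⟩).1 else 0) key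
      exact fun i j hij => ha hij
    · rw [mem_Bset_iff]
      intro j
      by_cases h : j < M+1
      · simp only [dif_pos h]
        exact Finset.mem_Icc.1 (g ⟨j, h⟩).2
      · simp only [dif_neg h]
        constructor
        · simp [bLo, hμ j (by omega), hν j (by omega)]
        · exact Nat.zero_le _
  left_inv := by
    rintro ⟨ρ, hρ⟩
    refine Subtype.ext (Partn.ext' fun j => ?_)
    by_cases h : j < M+1
    · simp [dif_pos h]; intro hh; omega
    · simp only [dif_neg h]
      have hb := ((mem_Bset_iff μ ν ρ).1 hρ j).2
      obtain ⟨j', rfl⟩ : ∃ j', j = j' + 1 := ⟨j - 1, by omega⟩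
      have hz : bHi μ ν (j'+1) = min (ν.parts (j'+1) + 1) (μ.parts j') := rfl
      have : μ.parts j' = 0 := hμ j' (by omega)
      omega
  right_inv := by
    intro g
    funext j
    refine Subtype.ext ?_
    simp only [dif_pos j.2]

lemma card_Icc_coe (a b : ℕ) : Nat.card ↥(Finset.Icc a b) = b + 1 - a := by
  rw [Nat.card_eq_fintype_card, Fintype.card_coe, Nat.card_Icc]

lemma card_Aset (M : ℕ) (hμ : ∀ j, M ≤ j → μ.parts j = 0)
    (hν : ∀ j, M ≤ j → ν.parts j = 0) :
    Nat.card ↥(Aset μ ν) = ∏ j ∈ range M, dnum μ ν j := by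
  rw [Nat.card_congr (aEquiv μ ν M hμ hν), Nat.card_pi]
  rw [← Fin.prod_univ_eq_prod_range (fun j => dnum μ ν j) M]
  exact Finset.prod_congr rfl fun j _ => by rw [card_Icc_coe]; rfl

lemma card_Bset (M : ℕ) (hμ : ∀ j, M ≤ j → μ.parts j = 0)
    (hν : ∀ j, M ≤ j → ν.parts j = 0) :
    Nat.card ↥(Bset μ ν) = ∏ j ∈ range (M+1), enum μ ν j := by
  rw [Nat.card_congr (bEquiv μ ν M hμ hν), Nat.card_pi]
  rw [← Fin.prod_univ_eq_prod_range (fun j => enum μ ν j) (M+1)]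
  exact Finset.prod_congr rfl fun j _ => by rw [card_Icc_coe]; rfl

lemma exists_bound : ∃ M, (∀ j, M ≤ j → μ.parts j = 0) ∧ (∀ j, M ≤ j → ν.parts j = 0) := by
  obtain ⟨N1, h1⟩ := μ.eventually_zero
  obtain ⟨N2, h2⟩ := ν.eventually_zero
  exact ⟨max N1 N2, fun j hj => h1 j (by omega), fun j hj => h2 j (by omega)⟩

instance finA : Finite ↥(Aset μ ν) := by
  obtain ⟨M, hμ, hν⟩ := exists_bound μ ν
  exact Finite.of_equiv _ (aEquiv μ ν M hμ hν).symm

instance finB : Finite ↥(Bset μ ν) := by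
  obtain ⟨M, hμ, hν⟩ := exists_bound μ ν
  exact Finite.of_equiv _ (bEquiv μ ν M hμ hν).symm

lemma card_Bset_eq : Nat.card ↥(Bset μ ν) = 2 * Nat.card ↥(Aset μ ν) := by
  obtain ⟨M, hμ, hν⟩ := exists_bound μ ν
  rw [card_Aset μ ν M hμ hν, card_Bset μ ν M hμ hν]
  have htri := (key_tri μ ν M).2.1 (by rw [hμ M le_rfl, hν (M+1) (by omega)])
  rw [htri]
  congr 1
  rw [prod_range_succ]
  have hdM : dnum μ ν M = 1 := by
    have h1 : μ.parts M = 0 := hμ M le_rfl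
    have h2 : ν.parts (M+1) = 0 := hν (M+1) (by omega)
    simp only [dnum, aHi, aLo]
    omega
  rw [hdM, mul_one]

noncomputable def equivOfNatCardEq {α β : Type} [Finite α] [Finite β]
    (h : Nat.card α = Nat.card β) : α ≃ β := by
  have := Fintype.ofFinite α; have := Fintype.ofFinite β
  exact Fintype.equivOfCardEq (by rwa [← Nat.card_eq_fintype_card, ← Nat.card_eq_fintype_card])

noncomputable def locEquiv : ↥(Bset μ ν) ≃ Bool × ↥(Aset μ ν) :=
  equivOfNatCardEq (by
    rw [Nat.card_prod, card_Bset_eq]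
    have : Nat.card Bool = 2 := by rw [Nat.card_eq_fintype_card]; rfl
    rw [this])

end Krat
end Part2

section Part3
namespace Krat
open Finset

open scoped Classical in
noncomputable def fwd (μ ν ρ' : Partn) : Bool × Partn :=
  if h : ρ' ∈ Bset μ ν then
    ((locEquiv μ ν ⟨ρ', h⟩).1, ((locEquiv μ ν ⟨ρ', h⟩).2 : ↥(Aset μ ν)).1)
  else (false, ρ')

open scoped Classical in
noncomputable def bwd (μ ν : Partn) (b : Bool) (ρ : Partn) : Partn :=
  if h : ρ ∈ Aset μ ν then (((locEquiv μ ν).symm (b, ⟨ρ, h⟩) : ↥(Bset μ ν))).1 else ρ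

lemma fwd_mem {μ ν ρ' : Partn} (h : ρ' ∈ Bset μ ν) : (fwd μ ν ρ').2 ∈ Aset μ ν := by
  classical
  rw [fwd, dif_pos h]
  exact ((locEquiv μ ν ⟨ρ', h⟩).2).2

lemma bwd_mem {μ ν ρ : Partn} (b : Bool) (h : ρ ∈ Aset μ ν) : bwd μ ν b ρ ∈ Bset μ ν := by
  classical
  rw [bwd, dif_pos h]
  exact ((locEquiv μ ν).symm (b, ⟨ρ, h⟩)).2

lemma bwd_fwd {μ ν ρ' : Partn} (h : ρ' ∈ Bset μ ν) :
    bwd μ ν (fwd μ ν ρ').1 (fwd μ ν ρ').2 = ρ' := by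
  classical
  rw [fwd, dif_pos h]
  have hm : ((locEquiv μ ν ⟨ρ', h⟩).2 : ↥(Aset μ ν)).1 ∈ Aset μ ν :=
    ((locEquiv μ ν ⟨ρ', h⟩).2).2
  rw [bwd, dif_pos hm]
  have e1 : ((locEquiv μ ν ⟨ρ', h⟩).1,
      (⟨((locEquiv μ ν ⟨ρ', h⟩).2 : ↥(Aset μ ν)).1, hm⟩ : ↥(Aset μ ν))) =
      locEquiv μ ν ⟨ρ', h⟩ := by
    refine Prod.ext rfl (Subtype.ext rfl)
  rw [e1, Equiv.symm_apply_apply]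

lemma fwd_bwd {μ ν ρ : Partn} (b : Bool) (h : ρ ∈ Aset μ ν) :
    fwd μ ν (bwd μ ν b ρ) = (b, ρ) := by
  classical
  rw [bwd, dif_pos h]
  have hm : (((locEquiv μ ν).symm (b, ⟨ρ, h⟩) : ↥(Bset μ ν))).1 ∈ Bset μ ν :=
    ((locEquiv μ ν).symm (b, ⟨ρ, h⟩)).2
  rw [fwd, dif_pos hm]
  have e1 : (⟨(((locEquiv μ ν).symm (b, ⟨ρ, h⟩) : ↥(Bset μ ν))).1, hm⟩ : ↥(Bset μ ν)) =
      (locEquiv μ ν).symm (b, ⟨ρ, h⟩) := Subtype.ext rfl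
  rw [e1, Equiv.apply_symm_apply]

def SeqSet (k : ℕ) (w : ℕ → Bool) : Set (ℕ → Partn) :=
  {f | (∀ i, k < i → f i = Partn.empty) ∧ f 0 = Partn.empty ∧ f k = Partn.empty ∧
    (∀ i, 1 ≤ i → i ≤ k →
      if w i then HStrip (f (i - 1)) (f i) else VStripDel (f (i - 1)) (f i))}

section Swap

variable (k i : ℕ) (w : ℕ → Bool)

def wsw : ℕ → Bool := fun j => if j = i then false else if j = i + 1 then true else w j

lemma memB_of_seq (hi1 : 1 ≤ i) (hik : i + 1 ≤ k) (hR : w i = true) (hD : w (i + 1) = false) {f : ℕ → Partn} (hf : f ∈ SeqSet k w) :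
    f i ∈ Bset (f (i - 1)) (f (i + 1)) := by
  have s1 := hf.2.2.2 i hi1 (by omega)
  have s2 := hf.2.2.2 (i + 1) (by omega) hik
  rw [hR] at s1
  rw [hD] at s2
  simp only [if_true, if_false, Nat.add_sub_cancel] at s1 s2
  exact ⟨s1, s2⟩

lemma memA_of_seq' (hi1 : 1 ≤ i) (hik : i + 1 ≤ k) {g : ℕ → Partn} (hg : g ∈ SeqSet k (wsw i w)) :
    g i ∈ Aset (g (i - 1)) (g (i + 1)) := by
  have s1 := hg.2.2.2 i hi1 (by omega)
  have s2 := hg.2.2.2 (i + 1) (by omega) hik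
  have e1 : wsw i w i = false := by simp [wsw]
  have e2 : wsw i w (i + 1) = true := by simp [wsw]
  rw [e1] at s1
  rw [e2] at s2
  simp only [if_true, if_false, Nat.add_sub_cancel] at s1 s2
  exact ⟨s1, s2⟩

lemma mem_toFun (hi1 : 1 ≤ i) (hik : i + 1 ≤ k) (hR : w i = true) (hD : w (i + 1) = false) {f : ℕ → Partn} (hf : f ∈ SeqSet k w) :
    Function.update f i (fwd (f (i - 1)) (f (i + 1)) (f i)).2 ∈ SeqSet k (wsw i w) := by
  set ρ := (fwd (f (i - 1)) (f (i + 1)) (f i)).2 with hρdef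
  have hρ : ρ ∈ Aset (f (i - 1)) (f (i + 1)) := fwd_mem (memB_of_seq k i w hi1 hik hR hD hf)
  have hne : ∀ j : ℕ, j ≠ i → Function.update f i ρ j = f j :=
    fun j hj => Function.update_of_ne hj _ _
  have hupi : Function.update f i ρ i = ρ := Function.update_self _ _ _
  refine ⟨fun j hj => ?_, ?_, ?_, fun j hj1 hjk => ?_⟩
  · rw [hne j (by omega)]; exact hf.1 j hj
  · rw [hne 0 (by omega)]; exact hf.2.1
  · rw [hne k (by omega)]; exact hf.2.2.1
  · by_cases hji : j = i
    · subst hji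
      have : wsw j w j = false := by simp [wsw]
      rw [this, if_neg (by simp), hupi, hne (j - 1) (by omega)]
      exact hρ.1
    · by_cases hji1 : j = i + 1
      · subst hji1
        have : wsw i w (i + 1) = true := by simp [wsw]
        rw [this, if_pos rfl, hne (i + 1) (by omega)]
        have : i + 1 - 1 = i := by omega
        rw [this, hupi]
        exact hρ.2
      · have hw : wsw i w j = w j := by simp [wsw, hji, hji1]
        rw [hw, hne j hji, hne (j - 1) (by omega)]
        exact hf.2.2.2 j hj1 hjk

lemma mem_invFun (hi1 : 1 ≤ i) (hik : i + 1 ≤ k) (hR : w i = true) (hD : w (i + 1) = false) {g : ℕ → Partn} (b : Bool) (hg : g ∈ SeqSet k (wsw i w)) :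
    Function.update g i (bwd (g (i - 1)) (g (i + 1)) b (g i)) ∈ SeqSet k w := by
  set σ := bwd (g (i - 1)) (g (i + 1)) b (g i) with hσdef
  have hσ : σ ∈ Bset (g (i - 1)) (g (i + 1)) :=
    bwd_mem b (memA_of_seq' k i w hi1 hik hg)
  have hne : ∀ j : ℕ, j ≠ i → Function.update g i σ j = g j :=
    fun j hj => Function.update_of_ne hj _ _
  have hupi : Function.update g i σ i = σ := Function.update_self _ _ _
  refine ⟨fun j hj => ?_, ?_, ?_, fun j hj1 hjk => ?_⟩
  · rw [hne j (by omega)]; exact hg.1 j hj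
  · rw [hne 0 (by omega)]; exact hg.2.1
  · rw [hne k (by omega)]; exact hg.2.2.1
  · by_cases hji : j = i
    · subst hji
      rw [hR, if_pos rfl, hupi, hne (j - 1) (by omega)]
      exact hσ.1
    · by_cases hji1 : j = i + 1
      · subst hji1
        rw [hD, if_neg (by simp), hne (i + 1) (by omega)]
        have : i + 1 - 1 = i := by omega
        rw [this, hupi]
        exact hσ.2
      · rw [hne j hji, hne (j - 1) (by omega)]
        have hw : wsw i w j = w j := by simp [wsw, hji, hji1]
        have := hg.2.2.2 j hj1 hjk
        rw [hw] at this
        exact this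

noncomputable def swapEquiv (hi1 : 1 ≤ i) (hik : i + 1 ≤ k) (hR : w i = true) (hD : w (i + 1) = false) : ↥(SeqSet k w) ≃ Bool × ↥(SeqSet k (wsw i w)) where
  toFun F := ((fwd (F.1 (i - 1)) (F.1 (i + 1)) (F.1 i)).1,
    ⟨Function.update F.1 i (fwd (F.1 (i - 1)) (F.1 (i + 1)) (F.1 i)).2,
      mem_toFun k i w hi1 hik hR hD F.2⟩)
  invFun BG := ⟨Function.update BG.2.1 i
      (bwd (BG.2.1 (i - 1)) (BG.2.1 (i + 1)) BG.1 (BG.2.1 i)),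
    mem_invFun k i w hi1 hik hR hD BG.1 BG.2.2⟩
  left_inv := by
    rintro ⟨f, hf⟩
    refine Subtype.ext (funext fun j => ?_)
    set ρ := (fwd (f (i - 1)) (f (i + 1)) (f i)).2 with hρdef
    set g := Function.update f i ρ with hgdef
    have hgm1 : g (i - 1) = f (i - 1) := Function.update_of_ne (by omega) _ _
    have hgp1 : g (i + 1) = f (i + 1) := Function.update_of_ne (by omega) _ _
    have hgi : g i = ρ := Function.update_self _ _ _
    show Function.update g i (bwd (g (i - 1)) (g (i + 1))
      (fwd (f (i - 1)) (f (i + 1)) (f i)).1 (g i)) j = f j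
    rw [hgm1, hgp1, hgi, hρdef,
      bwd_fwd (memB_of_seq k i w hi1 hik hR hD hf)]
    by_cases hj : j = i
    · subst hj; exact Function.update_self _ _ _
    · rw [Function.update_of_ne hj _ _, hgdef, Function.update_of_ne hj _ _]
  right_inv := by
    rintro ⟨b, g, hg⟩
    have hA : g i ∈ Aset (g (i - 1)) (g (i + 1)) := memA_of_seq' k i w hi1 hik hg
    set σ := bwd (g (i - 1)) (g (i + 1)) b (g i) with hσdef
    set f := Function.update g i σ with hfdef
    have hfm1 : f (i - 1) = g (i - 1) := Function.update_of_ne (by omega) _ _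
    have hfp1 : f (i + 1) = g (i + 1) := Function.update_of_ne (by omega) _ _
    have hfi : f i = σ := Function.update_self _ _ _
    have hfwd : fwd (f (i - 1)) (f (i + 1)) (f i) = (b, g i) := by
      rw [hfm1, hfp1, hfi, hσdef, fwd_bwd b hA]
    refine Prod.ext ?_ (Subtype.ext (funext fun j => ?_))
    · show (fwd (f (i - 1)) (f (i + 1)) (f i)).1 = b
      rw [hfwd]
    · show Function.update f i (fwd (f (i - 1)) (f (i + 1)) (f i)).2 j = g j
      rw [hfwd]
      by_cases hj : j = i
      · subst hj; exact Function.update_self _ _ _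
      · rw [Function.update_of_ne hj _ _, hfdef, Function.update_of_ne hj _ _]

lemma swap_card (hi1 : 1 ≤ i) (hik : i + 1 ≤ k) (hR : w i = true) (hD : w (i + 1) = false) : Nat.card ↥(SeqSet k w) = 2 * Nat.card ↥(SeqSet k (wsw i w)) := by
  rw [Nat.card_congr (swapEquiv k i w hi1 hik hR hD), Nat.card_prod]
  have : Nat.card Bool = 2 := by rw [Nat.card_eq_fintype_card]; rfl
  rw [this]

end Swap
end Krat
end Part3

section Part4
namespace Krat
open Finset

lemma empty_mem_SeqSet (k : ℕ) (w : ℕ → Bool) : (fun _ => Partn.empty) ∈ SeqSet k w := by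
  refine ⟨fun _ _ => rfl, rfl, rfl, fun i _ _ => ?_⟩
  cases hw : w i <;> simp only [hw, if_true, if_false, Bool.false_eq_true]
  · exact fun j => ⟨le_rfl, Nat.le_succ _⟩
  · exact fun j => ⟨le_rfl, le_rfl⟩

lemma forced_empty_forward (k : ℕ) (w : ℕ → Bool) {f : ℕ → Partn} (hf : f ∈ SeqSet k w) :
    ∀ n, n ≤ k → (∀ j, 1 ≤ j → j ≤ n → w j = false) → f n = Partn.empty := by
  intro n
  induction n with
  | zero => intro _ _; exact hf.2.1
  | succ n IH =>
    intro hk hw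
    have hfn : f n = Partn.empty := IH (by omega) (fun j h1 h2 => hw j h1 (by omega))
    have s := hf.2.2.2 (n + 1) (by omega) hk
    rw [hw (n + 1) (by omega) le_rfl] at s
    simp only [Bool.false_eq_true, if_false] at s
    have he : n + 1 - 1 = n := by omega
    rw [he, hfn] at s
    refine Partn.ext' fun j => ?_
    have := (s j).1
    simpa [Partn.empty] using this

lemma forced_empty (k : ℕ) (w : ℕ → Bool)
    (hnc : ∀ s t, 1 ≤ s → s < t → t ≤ k → w s = true → w t = false → False)
    {f : ℕ → Partn} (hf : f ∈ SeqSet k w) : ∀ m, m ≤ k → f (k - m) = Partn.empty := by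
  intro m
  induction m with
  | zero => intro _; simpa using hf.2.2.1
  | succ m IH =>
    intro hm
    have hkm : k - m = (k - (m + 1)) + 1 := by omega
    set n := k - (m + 1) with hn
    have hstep := hf.2.2.2 (n + 1) (by omega) (by omega)
    have he : n + 1 - 1 = n := by omega
    cases hw : w (n + 1) with
    | true =>
      have hnext : f (n + 1) = Partn.empty := by rw [← hkm]; exact IH (by omega)
      rw [hw, if_pos rfl, he, hnext] at hstep
      refine Partn.ext' fun j => ?_
      have := (hstep j).1
      simpa [Partn.empty] using this
    | false =>
      apply forced_empty_forward k w hf n (by omega)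
      intro j h1 h2
      by_contra hj
      have hj' : w j = true := by
        cases hjj : w j
        · exact absurd hjj hj
        · rfl
      exact hnc j (n + 1) h1 (by omega) (by omega) hj' hw

lemma SeqSet_eq_singleton (k : ℕ) (w : ℕ → Bool)
    (hnc : ∀ s t, 1 ≤ s → s < t → t ≤ k → w s = true → w t = false → False) :
    SeqSet k w = {fun _ => Partn.empty} := by
  ext f
  simp only [Set.mem_singleton_iff]
  constructor
  · intro hf
    funext n
    by_cases hn : n ≤ k
    · have := forced_empty k w hnc hf (k - n) (by omega)
      rw [show k - (k - n) = n by omega] at this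
      exact this
    · exact hf.1 n (by omega)
  · rintro rfl; exact empty_mem_SeqSet k w

lemma exists_adj (k : ℕ) (w : ℕ → Bool) : ∀ t s, 1 ≤ s → s < t → t ≤ k → w s = true →
    w t = false → ∃ i, 1 ≤ i ∧ i + 1 ≤ k ∧ w i = true ∧ w (i + 1) = false := by
  intro t
  induction t with
  | zero => intro s _ h; omega
  | succ t IH =>
    intro s h1 hst htk hs ht
    cases hw : w t with
    | true => exact ⟨t, by omega, htk, hw, ht⟩
    | false =>
      have hlt : s < t := by
        rcases Nat.lt_or_ge s t with h | h
        · exact h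
        · have hs' : s = t := by omega
          rw [← hs', hs] at hw; cases hw
      exact IH s h1 hlt (by omega) hs hw

def cells (k : ℕ) (w : ℕ → Bool) : Finset (ℕ × ℕ) :=
  (Finset.range (k + 1) ×ˢ Finset.range (k + 1)).filter
    (fun p => 1 ≤ p.1 ∧ p.1 < p.2 ∧ p.2 ≤ k ∧ w p.1 = true ∧ w p.2 = false)

lemma mem_cells {k : ℕ} {w : ℕ → Bool} {p : ℕ × ℕ} : p ∈ cells k w ↔
    1 ≤ p.1 ∧ p.1 < p.2 ∧ p.2 ≤ k ∧ w p.1 = true ∧ w p.2 = false := by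
  simp only [cells, Finset.mem_filter, Finset.mem_product, Finset.mem_range]
  constructor
  · tauto
  · intro h; exact ⟨⟨by omega, by omega⟩, h⟩

lemma lhs_card (k : ℕ) (w : ℕ → Bool) :
    {S : Finset (ℕ × ℕ) | ∀ p ∈ S,
      1 ≤ p.1 ∧ p.1 < p.2 ∧ p.2 ≤ k ∧ w p.1 = true ∧ w p.2 = false}.ncard
    = 2 ^ (cells k w).card := by
  have hset : {S : Finset (ℕ × ℕ) | ∀ p ∈ S,
      1 ≤ p.1 ∧ p.1 < p.2 ∧ p.2 ≤ k ∧ w p.1 = true ∧ w p.2 = false}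
      = ↑((cells k w).powerset) := by
    ext S
    simp only [Set.mem_setOf_eq, Finset.coe_powerset, Set.mem_setOf_eq,
      Finset.mem_coe, Finset.mem_powerset]
    constructor
    · intro h p hp
      exact mem_cells.2 (h p hp)
    · intro h p hp
      exact mem_cells.1 (h hp)
  rw [hset, Set.ncard_coe_finset, Finset.card_powerset]

def tsw (i : ℕ) : ℕ → ℕ := fun x => if x = i then i + 1 else if x = i + 1 then i else x

lemma cells_swap (k i : ℕ) (w : ℕ → Bool) (hi1 : 1 ≤ i) (hik : i + 1 ≤ k)
    (hR : w i = true) (hD : w (i + 1) = false) :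
    (cells k w).card = (cells k (wsw i w)).card + 1 := by
  have hmem : (i, i + 1) ∈ cells k w := mem_cells.2 ⟨hi1, by omega, hik, hR, hD⟩
  have hττ : ∀ x, tsw i (tsw i x) = x := by
    intro x; simp only [tsw]; split_ifs <;> omega
  have hwsw_i : wsw i w i = false := by simp [wsw]
  have hwsw_i1 : wsw i w (i + 1) = true := by simp [wsw]
  have hwsw_other : ∀ x, x ≠ i → x ≠ i + 1 → wsw i w x = w x := by
    intro x h1 h2; simp [wsw, h1, h2]
  rw [← Finset.card_erase_add_one hmem]
  congr 1
  apply Finset.card_bij' (fun p _ => (tsw i p.1, tsw i p.2)) (fun p _ => (tsw i p.1, tsw i p.2))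
  · -- hi : maps erase into cells w'
    intro p hp
    rw [Finset.mem_erase] at hp
    obtain ⟨hne, hpc⟩ := hp
    obtain ⟨h1, h2, h3, h4, h5⟩ := mem_cells.1 hpc
    have hb_ne : p.2 ≠ i := by intro h; rw [h, hR] at h5; cases h5
    have ha_ne : p.1 ≠ i + 1 := by intro h; rw [h, hD] at h4; cases h4
    by_cases hai : p.1 = i
    · by_cases hbi : p.2 = i + 1
      · exact absurd (Prod.ext hai hbi) hne
      · have e1 : tsw i p.1 = i + 1 := by simp only [tsw]; split_ifs <;> omega
        have e2 : tsw i p.2 = p.2 := by simp only [tsw]; split_ifs <;> omega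
        refine mem_cells.2 ?_
        rw [e1, e2]
        exact ⟨by omega, by omega, h3, by rw [hwsw_i1], by rw [hwsw_other p.2 hb_ne hbi]; exact h5⟩
    · by_cases hbi : p.2 = i + 1
      · have e1 : tsw i p.1 = p.1 := by simp only [tsw]; split_ifs <;> omega
        have e2 : tsw i p.2 = i := by simp only [tsw]; split_ifs <;> omega
        refine mem_cells.2 ?_
        rw [e1, e2]
        exact ⟨h1, by omega, by omega, by rw [hwsw_other p.1 hai ha_ne]; exact h4, by rw [hwsw_i]⟩
      · have e1 : tsw i p.1 = p.1 := by simp only [tsw]; split_ifs <;> omega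
        have e2 : tsw i p.2 = p.2 := by simp only [tsw]; split_ifs <;> omega
        refine mem_cells.2 ?_
        rw [e1, e2]
        exact ⟨h1, h2, h3, by rw [hwsw_other p.1 hai ha_ne]; exact h4,
          by rw [hwsw_other p.2 hb_ne hbi]; exact h5⟩
  · -- hj : maps cells w' into erase
    intro p hp
    obtain ⟨h1, h2, h3, h4, h5⟩ := mem_cells.1 hp
    have ha_ne : p.1 ≠ i := by intro h; rw [h, hwsw_i] at h4; cases h4
    have hb_ne : p.2 ≠ i + 1 := by intro h; rw [h, hwsw_i1] at h5; cases h5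
    rw [Finset.mem_erase]
    constructor
    · intro h
      have e1 : tsw i p.1 = i := congrArg Prod.fst h
      have e2 : tsw i p.2 = i + 1 := congrArg Prod.snd h
      have : p.1 = i + 1 := by rw [← hττ p.1, e1]; simp only [tsw]; split_ifs <;> omega
      have : p.2 = i := by rw [← hττ p.2, e2]; simp only [tsw]; split_ifs <;> omega
      omega
    · by_cases hai : p.1 = i + 1
      · have e1 : tsw i p.1 = i := by simp only [tsw]; split_ifs <;> omega
        have hbig : i + 1 < p.2 := by omega
        have hbni : p.2 ≠ i := by omega
        have e2 : tsw i p.2 = p.2 := by simp only [tsw]; split_ifs <;> omega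
        refine mem_cells.2 ?_
        rw [e1, e2]
        exact ⟨hi1, by omega, h3, hR, by rw [← hwsw_other p.2 hbni hb_ne]; exact h5⟩
      · by_cases hbi : p.2 = i
        · have e2 : tsw i p.2 = i + 1 := by simp only [tsw]; split_ifs <;> omega
          have e1 : tsw i p.1 = p.1 := by simp only [tsw]; split_ifs <;> omega
          refine mem_cells.2 ?_
          rw [e1, e2]
          exact ⟨h1, by omega, by omega, by rw [← hwsw_other p.1 ha_ne hai]; exact h4, hD⟩
        · have e1 : tsw i p.1 = p.1 := by simp only [tsw]; split_ifs <;> omega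
          have e2 : tsw i p.2 = p.2 := by simp only [tsw]; split_ifs <;> omega
          refine mem_cells.2 ?_
          rw [e1, e2]
          exact ⟨h1, h2, h3, by rw [← hwsw_other p.1 ha_ne hai]; exact h4,
            by rw [← hwsw_other p.2 hbi hb_ne]; exact h5⟩
  · intro p _; exact Prod.ext (hττ p.1) (hττ p.2)
  · intro p _; exact Prod.ext (hττ p.1) (hττ p.2)

lemma main_count : ∀ n k (w : ℕ → Bool), (cells k w).card = n →
    Nat.card ↥(SeqSet k w) = 2 ^ n := by
  intro n
  induction n using Nat.strong_induction_on with
  | _ n IH =>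
    intro k w hn
    by_cases hadj : ∃ i, 1 ≤ i ∧ i + 1 ≤ k ∧ w i = true ∧ w (i + 1) = false
    · obtain ⟨i, hi1, hik, hR, hD⟩ := hadj
      have hcells := cells_swap k i w hi1 hik hR hD
      have hpos : 1 ≤ n := by omega
      rw [swap_card k i w hi1 hik hR hD,
        IH (n - 1) (by omega) k (wsw i w) (by omega)]
      have hmm : n = (n - 1) + 1 := by omega
      conv_rhs => rw [hmm]
      rw [pow_succ]
      ring
    · have hnc : ∀ s t, 1 ≤ s → s < t → t ≤ k → w s = true → w t = false → False := by
        intro s t h1 h2 h3 h4 h5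
        exact hadj (exists_adj k w t s h1 h2 h3 h4 h5)
      have h0 : cells k w = ∅ := by
        rw [Finset.eq_empty_iff_forall_notMem]
        intro p hp
        obtain ⟨a, b, c, d, e⟩ := mem_cells.1 hp
        exact hnc p.1 p.2 a b c d e
      have hn0 : n = 0 := by rw [h0] at hn; simpa using hn.symm
      rw [SeqSet_eq_singleton k w hnc, hn0, pow_zero]
      rw [Nat.card_coe_set_eq, Set.ncard_singleton]

end Krat

/-- Theorem 2.1 (Krattenthaler): let `w = w_1 … w_k` be a word over `{R, D}` (here
`w i = true` means `R`, `w i = false` means `D`).  The 01-fillings of the associated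
Ferrers shape — arbitrary sets of cells `(s, t)` with `1 ≤ s < t ≤ k`, `w s = R`,
`w t = D` — are equinumerous with sequences `(λ^0, λ^1, …, λ^k)` of partitions with
`λ^0 = λ^k = ∅` such that `λ^i` is obtained from `λ^{i-1}` by adding a (possibly empty)
horizontal strip when `w i = R`, and by deleting a (possibly empty) vertical strip when
`w i = D`. -/
theorem stmt18 (k : ℕ) (w : ℕ → Bool) :
    {S : Finset (ℕ × ℕ) | ∀ p ∈ S,
      1 ≤ p.1 ∧ p.1 < p.2 ∧ p.2 ≤ k ∧ w p.1 = true ∧ w p.2 = false}.ncard =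
    {f : ℕ → Partn | (∀ i, k < i → f i = Partn.empty) ∧
      f 0 = Partn.empty ∧ f k = Partn.empty ∧
      (∀ i, 1 ≤ i → i ≤ k →
        if w i then HStrip (f (i - 1)) (f i) else VStripDel (f (i - 1)) (f i))}.ncard := by
  rw [Krat.lhs_card k w]
  have hseq : {f : ℕ → Partn | (∀ i, k < i → f i = Partn.empty) ∧
      f 0 = Partn.empty ∧ f k = Partn.empty ∧
      (∀ i, 1 ≤ i → i ≤ k →
        if w i then HStrip (f (i - 1)) (f i) else VStripDel (f (i - 1)) (f i))}
      = Krat.SeqSet k w := rfl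
  rw [hseq, ← Nat.card_coe_set_eq]
  exact (Krat.main_count (Krat.cells k w).card k w rfl).symm

end Part4
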